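/- If a finite system of homogeneous linear equations with integer coefficients has a solution in which every coordinate is a positive real number, then it has a solution in which every coordinate is a positive integer. -/

import Mathlib

open Matrix TensorProduct

set_option synthInstance.maxHeartbeats 1000000
set_option maxHeartbeats 1000000
/-- Real solutions of a rational homogeneous system lie in the real span of the
rational solutions. -/
lemma span_rat_solutions {m r : ℕ} (M : Matrix (Fin m) (Fin r) ℚ)
    (x : Fin r → ℝ) (hx : (M.map (Rat.cast : ℚ → ℝ)).mulVec x = 0) :
    x ∈ Submodule.span ℝ
      {w : Fin r → ℝ | ∃ u : Fin r → ℚ, M.mulVec u = 0 ∧ w = fun k => (u k : ℝ)} := by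
  classical
  set f : (Fin r → ℚ) →ₗ[ℚ] (Fin m → ℚ) := M.mulVecLin with hf
  set K := LinearMap.ker f with hK
  have hexact : Function.Exact K.subtype f := LinearMap.exact_subtype_ker_map f
  have hexactR : Function.Exact (K.subtype.lTensor ℝ) (f.lTensor ℝ) :=
    Module.Flat.lTensor_exact ℝ hexact
  set eR : ℝ ⊗[ℚ] (Fin r → ℚ) ≃ₗ[ℝ] (Fin r → ℝ) :=
    TensorProduct.piScalarRight ℚ ℝ ℝ (Fin r) with heR
  set eM : ℝ ⊗[ℚ] (Fin m → ℚ) ≃ₗ[ℝ] (Fin m → ℝ) :=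
    TensorProduct.piScalarRight ℚ ℝ ℝ (Fin m) with heM
  -- compatibility
  have hcompat : ∀ t : ℝ ⊗[ℚ] (Fin r → ℚ),
      eM (f.lTensor ℝ t) = (M.map (Rat.cast : ℚ → ℝ)).mulVec (eR t) := by
    intro t
    induction t using TensorProduct.induction_on with
    | zero => simp
    | tmul a u =>
        ext i
        simp only [LinearMap.lTensor_tmul, heM, heR, TensorProduct.piScalarRight_apply,
          TensorProduct.piScalarRightHom_tmul]
        simp only [hf, Matrix.mulVecLin_apply, Matrix.mulVec, dotProduct, Matrix.map_apply]
        simp only [Rat.smul_def]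
        push_cast
        rw [Finset.sum_mul]
        exact Finset.sum_congr rfl fun k _ => by ring
    | add t₁ t₂ h₁ h₂ => simp [map_add, h₁, h₂, Matrix.mulVec_add]
  have ht0 : f.lTensor ℝ (eR.symm x) = 0 := by
    have := hcompat (eR.symm x)
    rw [LinearEquiv.apply_symm_apply] at this
    rw [hx] at this
    exact eM.map_eq_zero_iff.mp this
  obtain ⟨t, ht⟩ := (hexactR _).mp ht0
  have hx' : x = eR (K.subtype.lTensor ℝ t) := by rw [ht, LinearEquiv.apply_symm_apply]
  rw [hx']
  clear hx' ht ht0 hx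
  induction t using TensorProduct.induction_on with
  | zero => simp
  | tmul a u =>
      have : eR (K.subtype.lTensor ℝ (a ⊗ₜ u)) = a • fun k => ((u : Fin r → ℚ) k : ℝ) := by
        ext k
        simp only [LinearMap.lTensor_tmul, heR, TensorProduct.piScalarRight_apply,
          TensorProduct.piScalarRightHom_tmul, Submodule.subtype_apply, Pi.smul_apply,
          smul_eq_mul]
        rw [Rat.smul_def]; ring
      rw [this]
      refine Submodule.smul_mem _ _ (Submodule.subset_span ?_)
      refine ⟨(u : Fin r → ℚ), ?_, rfl⟩
      have h2 : f (u : Fin r → ℚ) = 0 := u.2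
      rwa [hf, Matrix.mulVecLin_apply] at h2
  | add t₁ t₂ h₁ h₂ =>
      rw [map_add, map_add]
      exact Submodule.add_mem _ h₁ h₂

/-- If a finite system of homogeneous linear equations with integer coefficients
has a solution with all coordinates positive reals, then it has a solution with
all coordinates positive integers. -/
theorem stmt0 {m r : ℕ} (c : Fin m → Fin r → ℤ)
    (h : ∃ x : Fin r → ℝ, (∀ i, ∑ k, (c i k : ℝ) * x k = 0) ∧ ∀ k, 0 < x k) :
    ∃ y : Fin r → ℤ, (∀ i, ∑ k, c i k * y k = 0) ∧ ∀ k, 0 < y k := by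
  classical
  rcases Nat.eq_zero_or_pos r with hr | hr
  · subst hr
    exact ⟨fun k => 1, fun i => by simp, fun k => k.elim0⟩
  obtain ⟨x, hsol, hpos⟩ := h
  -- Step 1: find a rational solution with all coordinates positive.
  have hz : ∃ z : Fin r → ℚ, (∀ i, ∑ k, (c i k : ℚ) * z k = 0) ∧ ∀ k, 0 < z k := by
    set M : Matrix (Fin m) (Fin r) ℚ := fun i k => (c i k : ℚ) with hM
    have hx : (M.map (Rat.cast : ℚ → ℝ)).mulVec x = 0 := by
      ext i
      simpa [Matrix.mulVec, dotProduct, Matrix.map_apply, Matrix.map, hM] using hsol i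
    have hspan := span_rat_solutions M x hx
    rw [Submodule.mem_span_set'] at hspan
    obtain ⟨n, a, w, hxw⟩ := hspan
    choose u hu hw using fun i => (w i).2
    -- sup-norm style bound
    set C : ℝ := 1 + ∑ i, ∑ k, |(u i k : ℝ)| with hC
    have hC0 : 0 < C := by
      have : (0:ℝ) ≤ ∑ i, ∑ k, |(u i k : ℝ)| :=
        Finset.sum_nonneg fun i _ => Finset.sum_nonneg fun k _ => abs_nonneg _
      linarith
    have hne : Nonempty (Fin r) := ⟨⟨0, hr⟩⟩
    set μ : ℝ := Finset.univ.inf' Finset.univ_nonempty x with hμ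
    have hμ0 : 0 < μ := by
      rw [hμ, Finset.lt_inf'_iff]
      exact fun k _ => hpos k
    have hμle : ∀ k, μ ≤ x k := fun k => Finset.inf'_le _ (Finset.mem_univ k)
    -- rational approximations of the coefficients
    have hq : ∀ i : Fin n, ∃ q : ℚ, |a i - (q : ℝ)| < μ / C := fun i =>
      exists_rat_near (a i) (by positivity)
    choose q hq using hq
    refine ⟨fun k => ∑ i, q i * u i k, ?_, ?_⟩
    · intro i
      have : ∑ k, (c i k : ℚ) * ∑ j, q j * u j k = ∑ j, q j * ∑ k, (c i k : ℚ) * u j k := by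
        simp_rw [Finset.mul_sum]
        rw [Finset.sum_comm]
        exact Finset.sum_congr rfl fun j _ => Finset.sum_congr rfl fun k _ => by ring
      rw [this]
      refine Finset.sum_eq_zero fun j _ => ?_
      have := congrFun (hu j) i
      simp only [Matrix.mulVec, dotProduct, hM, Pi.zero_apply] at this
      rw [this, mul_zero]
    · intro k
      have hxk : x k = ∑ i, a i * (u i k : ℝ) := by
        have := congrFun hxw k
        simp only [Finset.sum_apply, Pi.smul_apply, smul_eq_mul] at this
        rw [← this]
        refine Finset.sum_congr rfl fun i _ => ?_
        rw [congrFun (hw i) k]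
      have key : |(∑ i, (q i : ℝ) * (u i k : ℝ)) - x k| < μ := by
        rw [hxk, ← Finset.sum_sub_distrib]
        calc |∑ i, ((q i : ℝ) * (u i k : ℝ) - a i * (u i k : ℝ))|
            ≤ ∑ i, |(q i : ℝ) * (u i k : ℝ) - a i * (u i k : ℝ)| := Finset.abs_sum_le_sum_abs _ _
          _ = ∑ i, |a i - (q i : ℝ)| * |(u i k : ℝ)| := by
              refine Finset.sum_congr rfl fun i _ => ?_
              rw [abs_sub_comm, ← abs_mul]
              congr 1
              ring
          _ ≤ ∑ i, (μ / C) * |(u i k : ℝ)| := by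
              refine Finset.sum_le_sum fun i _ => ?_
              exact mul_le_mul_of_nonneg_right (hq i).le (abs_nonneg _)
          _ = (μ / C) * ∑ i, |(u i k : ℝ)| := by rw [Finset.mul_sum]
          _ < μ := by
              have h1 : ∑ i, |(u i k : ℝ)| < C := by
                rw [hC]
                have : ∑ i, |(u i k : ℝ)| ≤ ∑ i, ∑ k', |(u i k' : ℝ)| :=
                  Finset.sum_le_sum fun i _ =>
                    Finset.single_le_sum (f := fun k' => |(u i k' : ℝ)|)
                      (fun k' _ => abs_nonneg _) (Finset.mem_univ k)
                linarith
              have h2 : 0 < μ / C := by positivity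
              calc (μ / C) * ∑ i, |(u i k : ℝ)| < (μ / C) * C :=
                    mul_lt_mul_of_pos_left h1 h2
                _ = μ := by field_simp
      have hpos' : (0:ℝ) < ∑ i, (q i : ℝ) * (u i k : ℝ) := by
        have habs := abs_lt.mp key
        have hμk := hμle k
        linarith [habs.1]
      have hcast : ((∑ i, q i * u i k : ℚ) : ℝ) = ∑ i, (q i : ℝ) * (u i k : ℝ) := by push_cast; rfl
      have hfin : (0:ℝ) < ((∑ i, q i * u i k : ℚ) : ℝ) := by rw [hcast]; exact hpos'
      exact_mod_cast hfin
  -- Step 2: clear denominators.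
  obtain ⟨z, hzsol, hzpos⟩ := hz
  set d : ℕ := ∏ k, (z k).den with hd
  have hd0 : 0 < d := Finset.prod_pos fun k _ => (z k).pos
  have hint : ∀ k, ∃ a : ℤ, 0 < a ∧ (a : ℚ) = z k * d := by
    intro k
    obtain ⟨e, he⟩ : (z k).den ∣ d := Finset.dvd_prod_of_mem _ (Finset.mem_univ k)
    have he0 : 0 < e := by
      rcases Nat.eq_zero_or_pos e with h0 | h0
      · rw [h0, mul_zero] at he; omega
      · exact h0
    refine ⟨(z k).num * e, ?_, ?_⟩
    · have : 0 < (z k).num := Rat.num_pos.mpr (hzpos k)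
      positivity
    · push_cast
      rw [he]
      push_cast
      rw [← Rat.mul_den_eq_num]
      ring
  choose y hy0 hy using hint
  refine ⟨y, ?_, hy0⟩
  intro i
  have : ((∑ k, c i k * y k : ℤ) : ℚ) = d * ∑ k, (c i k : ℚ) * z k := by
    push_cast
    rw [Finset.mul_sum]
    refine Finset.sum_congr rfl fun k _ => ?_
    rw [hy k]
    ring
  rw [hzsol i, mul_zero] at this
  exact_mod_cast this
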